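/- Let (Λ, μ_Λ) be δ-regular up to scale h ∈ (0,1) with constant C_R, where a pair (X, μ) is called δ-regular up to scale h with constant C_R if μ(I) ≤ C_R|I|^δ for every interval I with |I| ≥ h, and μ(I) ≥ C_R^{-1}|I|^δ for every interval I with h ≤ |I| ≤ 1 centered at a point of X. Let X := Λ + [−h,h] and μ_X(A) := h^{δ−1}·Leb(X ∩ A). Then (X, μ_X) is δ-regular up to scale h with constant 30 C_R². -/

import Mathlib

open MeasureTheory Pointwise
open scoped ENNReal

lemma swap_lemma (ν : Measure ℝ) [IsFiniteMeasure ν] (c : ℝ) :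
    ∫⁻ t : ℝ, ν (Set.Icc (t - c) (t + c)) = ENNReal.ofReal (2 * c) * ν Set.univ := by
  set S : Set (ℝ × ℝ) := {p : ℝ × ℝ | |p.1 - p.2| ≤ c} with hSdef
  have hS : MeasurableSet S := by
    apply measurableSet_le (by fun_prop) measurable_const
  set f : ℝ × ℝ → ℝ≥0∞ := S.indicator 1 with hfdef
  have hf : Measurable f := measurable_const.indicator hS
  have h1 : ∀ t : ℝ, ν (Set.Icc (t - c) (t + c)) = ∫⁻ z, f (t, z) ∂ν := by
    intro t
    have he : (fun z => f (t, z)) = (Set.Icc (t - c) (t + c)).indicator 1 := by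
      funext z
      have hiff : (t, z) ∈ S ↔ z ∈ Set.Icc (t - c) (t + c) := by
        simp only [hSdef, Set.mem_setOf_eq, Set.mem_Icc, abs_le]
        constructor <;> (intro h; constructor <;> linarith [h.1, h.2])
      by_cases hz : z ∈ Set.Icc (t - c) (t + c)
      · rw [Set.indicator_of_mem hz, hfdef, Set.indicator_of_mem (hiff.mpr hz)]; rfl
      · rw [Set.indicator_of_notMem hz, hfdef,
          Set.indicator_of_notMem (fun hmem => hz (hiff.mp hmem))]
    rw [he, lintegral_indicator_one measurableSet_Icc]
  have h2 : ∀ z : ℝ, ∫⁻ t, f (t, z) = ENNReal.ofReal (2 * c) := by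
    intro z
    have he : (fun t => f (t, z)) = (Set.Icc (z - c) (z + c)).indicator 1 := by
      funext t
      have hiff : (t, z) ∈ S ↔ t ∈ Set.Icc (z - c) (z + c) := by
        simp only [hSdef, Set.mem_setOf_eq, Set.mem_Icc, abs_le]
        constructor <;> (intro h; constructor <;> linarith [h.1, h.2])
      by_cases hz : t ∈ Set.Icc (z - c) (z + c)
      · rw [Set.indicator_of_mem hz, hfdef, Set.indicator_of_mem (hiff.mpr hz)]; rfl
      · rw [Set.indicator_of_notMem hz, hfdef,
          Set.indicator_of_notMem (fun hmem => hz (hiff.mp hmem))]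
    rw [he, lintegral_indicator_one measurableSet_Icc, Real.volume_Icc]
    ring_nf
  calc ∫⁻ t : ℝ, ν (Set.Icc (t - c) (t + c))
      = ∫⁻ t : ℝ, ∫⁻ z, f (t, z) ∂ν := by simp_rw [h1]
    _ = ∫⁻ z, ∫⁻ t, f (t, z) ∂volume ∂ν := by
        apply lintegral_lintegral_swap
        exact hf.aemeasurable
    _ = ∫⁻ z, ENNReal.ofReal (2 * c) ∂ν := by simp_rw [h2]
    _ = ENNReal.ofReal (2 * c) * ν Set.univ := by rw [lintegral_const]

def IsDeltaRegular (X : Set ℝ) (μ : Measure ℝ) (δ C h : ℝ) : Prop :=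
  (∀ a b : ℝ, h ≤ b - a → μ (Set.Icc a b) ≤ ENNReal.ofReal (C * (b - a) ^ δ)) ∧
  (∀ x r : ℝ, x ∈ X → h ≤ 2 * r → 2 * r ≤ 1 →
    ENNReal.ofReal (C⁻¹ * (2 * r) ^ δ) ≤ μ (Set.Icc (x - r) (x + r)))

set_option maxHeartbeats 1000000 in
theorem stmt9 (Λ : Set ℝ) (μΛ : Measure ℝ) (δ h C_R : ℝ)
    (hΛ : IsCompact Λ) [IsFiniteMeasure μΛ] (hsupp : μΛ Λᶜ = 0)
    (hδ : δ ∈ Set.Icc (0:ℝ) 1) (hh : h ∈ Set.Ioo (0:ℝ) 1) (hC : 1 ≤ C_R)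
    (hreg : IsDeltaRegular Λ μΛ δ C_R h) :
    IsDeltaRegular (Λ + Set.Icc (-h) h)
      (ENNReal.ofReal (h ^ (δ - 1)) • volume.restrict (Λ + Set.Icc (-h) h))
      δ (30 * C_R ^ 2) h := by
  obtain ⟨hδ0, hδ1⟩ := hδ
  obtain ⟨hh0, hh1⟩ := hh
  have hC0 : (0:ℝ) < C_R := lt_of_lt_of_le one_pos hC
  set X := Λ + Set.Icc (-h) h with hXdef
  have hXm : MeasurableSet X := ((hΛ.add isCompact_Icc).isClosed).measurableSet
  have hmemX : ∀ y ∈ Λ, ∀ w : ℝ, |w - y| ≤ h → w ∈ X := by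
    intro y hy w hw
    rw [abs_le] at hw
    exact ⟨y, hy, w - y, Set.mem_Icc.mpr ⟨by linarith [hw.1], hw.2⟩, by ring⟩
  have hXmem : ∀ t ∈ X, ∃ y ∈ Λ, |t - y| ≤ h := by
    rintro t ⟨y, hy, u, hu, rfl⟩
    rw [Set.mem_Icc] at hu
    exact ⟨y, hy, by rw [abs_le]; constructor <;> simp <;> linarith [hu.1, hu.2]⟩
  have happ : ∀ A : Set ℝ, MeasurableSet A →
      (ENNReal.ofReal (h ^ (δ - 1)) • volume.restrict X) A
        = ENNReal.ofReal (h ^ (δ - 1)) * volume (A ∩ X) := by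
    intro A hA
    rw [Measure.smul_apply, Measure.restrict_apply hA, smul_eq_mul]
  constructor
  · -- upper bound
    intro a b hab
    rw [happ _ measurableSet_Icc]
    have hba : 0 < b - a := lt_of_lt_of_le hh0 hab
    set K := Set.Icc (a - 2*h) (b + 2*h) with hKdef
    set ν := μΛ.restrict K with hνdef
    have key : ENNReal.ofReal (C_R⁻¹ * h ^ δ) * volume (Set.Icc a b ∩ X)
        ≤ ENNReal.ofReal (2 * (2*h)) * ν Set.univ := by
      rw [← swap_lemma ν (2*h)]
      rw [← lintegral_indicator_const (measurableSet_Icc.inter hXm)]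
      apply lintegral_mono
      intro t
      by_cases ht : t ∈ Set.Icc a b ∩ X
      · rw [Set.indicator_of_mem ht]
        obtain ⟨hta, htX⟩ := ht
        rw [Set.mem_Icc] at hta
        obtain ⟨y, hy, hty⟩ := hXmem t htX
        rw [abs_le] at hty
        have hsub : Set.Icc (y - h/2) (y + h/2) ⊆ Set.Icc (t - 2*h) (t + 2*h) ∩ K := by
          intro w hw
          rw [Set.mem_Icc] at hw
          refine ⟨Set.mem_Icc.mpr ⟨?_, ?_⟩, Set.mem_Icc.mpr ⟨?_, ?_⟩⟩ <;>
            linarith [hw.1, hw.2, hty.1, hty.2, hta.1, hta.2]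
        calc ENNReal.ofReal (C_R⁻¹ * h ^ δ)
            = ENNReal.ofReal (C_R⁻¹ * (2 * (h/2)) ^ δ) := by rw [show (2:ℝ) * (h/2) = h from by ring]
          _ ≤ μΛ (Set.Icc (y - h/2) (y + h/2)) :=
              hreg.2 y (h/2) hy (by linarith) (by linarith)
          _ ≤ ν (Set.Icc (t - 2*h) (t + 2*h)) := by
              rw [hνdef, Measure.restrict_apply measurableSet_Icc]
              exact measure_mono hsub
      · rw [Set.indicator_of_notMem ht]; exact zero_le
    have hK : ν Set.univ ≤ ENNReal.ofReal (C_R * ((b + 2*h) - (a - 2*h)) ^ δ) := by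
      rw [hνdef, Measure.restrict_apply_univ]
      exact hreg.1 _ _ (by linarith)
    have key2 : ENNReal.ofReal (C_R⁻¹ * h ^ δ) * volume (Set.Icc a b ∩ X)
        ≤ ENNReal.ofReal (C_R⁻¹ * h ^ δ)
          * ENNReal.ofReal (4 * C_R^2 * h^(1-δ) * ((b-a) + 4*h) ^ δ) := by
      refine key.trans ?_
      refine (mul_le_mul_right hK _).trans ?_
      rw [← ENNReal.ofReal_mul (by linarith), ← ENNReal.ofReal_mul (by positivity)]
      apply ENNReal.ofReal_le_ofReal
      have hhh : h ^ δ * h ^ (1 - δ) = h := by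
        rw [← Real.rpow_add hh0]; norm_num
      have he1 : C_R⁻¹ * h ^ δ * (4 * C_R ^ 2 * h ^ (1 - δ) * (b - a + 4 * h) ^ δ)
          = 4 * C_R * (h ^ δ * h ^ (1-δ)) * ((b - a + 4*h) ^ δ) := by
        field_simp
      have he2 : b + 2*h - (a - 2*h) = b - a + 4*h := by ring
      rw [he1, hhh, he2]
      nlinarith [Real.rpow_nonneg (show (0:ℝ) ≤ b - a + 4*h by linarith) δ, hC0]
    have hpos : ENNReal.ofReal (C_R⁻¹ * h ^ δ) ≠ 0 :=
      (ENNReal.ofReal_pos.mpr (mul_pos (inv_pos.mpr hC0) (Real.rpow_pos_of_pos hh0 δ))).ne'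
    have hvol : volume (Set.Icc a b ∩ X)
        ≤ ENNReal.ofReal (4 * C_R^2 * h^(1-δ) * ((b-a) + 4*h) ^ δ) :=
      (ENNReal.mul_le_mul_iff_right hpos ENNReal.ofReal_ne_top).mp key2
    calc ENNReal.ofReal (h ^ (δ-1)) * volume (Set.Icc a b ∩ X)
        ≤ ENNReal.ofReal (h ^ (δ-1))
          * ENNReal.ofReal (4 * C_R^2 * h^(1-δ) * ((b-a) + 4*h) ^ δ) :=
          mul_le_mul_right hvol _
      _ = ENNReal.ofReal (h ^ (δ-1) * (4 * C_R^2 * h^(1-δ) * ((b-a) + 4*h) ^ δ)) :=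
          (ENNReal.ofReal_mul (Real.rpow_nonneg hh0.le _)).symm
      _ ≤ ENNReal.ofReal (30 * C_R ^ 2 * (b - a) ^ δ) := by
          apply ENNReal.ofReal_le_ofReal
          have e1 : h^(δ-1) * h^(1-δ) = 1 := by
            rw [← Real.rpow_add hh0]; norm_num
          have e2 : ((b-a) + 4*h) ^ δ ≤ 5 * (b-a)^δ := by
            calc ((b-a) + 4*h) ^ δ ≤ (5*(b-a))^δ :=
                  Real.rpow_le_rpow (by linarith) (by linarith) hδ0
              _ = 5^δ * (b-a)^δ := Real.mul_rpow (by norm_num) hba.le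
              _ ≤ 5 * (b-a)^δ := by
                  have h5 : (5:ℝ)^δ ≤ 5 := by
                    calc (5:ℝ)^δ ≤ 5^(1:ℝ) :=
                          Real.rpow_le_rpow_of_exponent_le (by norm_num) hδ1
                      _ = 5 := Real.rpow_one 5
                  nlinarith [Real.rpow_nonneg hba.le δ]
          have e3 : h ^ (δ-1) * (4 * C_R^2 * h^(1-δ) * ((b-a) + 4*h) ^ δ)
              = 4 * C_R^2 * (h^(δ-1) * h^(1-δ)) * (((b-a) + 4*h) ^ δ) := by ring
          rw [e3, e1]
          nlinarith [e2, sq_nonneg C_R, hC0, Real.rpow_nonneg hba.le δ,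
            Real.rpow_nonneg (show (0:ℝ) ≤ b - a + 4*h by linarith) δ]

  · -- lower bound
    intro x r hx h2r hr1
    rw [happ _ measurableSet_Icc]
    obtain ⟨y, hy, hxy⟩ := hXmem x hx
    rw [abs_le] at hxy
    have hr0 : 0 < r := by linarith
    by_cases hcase : r ≤ 4*h
    · -- small r: X contains an interval of length h/2 inside [x-r, x+r]
      have main : ∀ u : ℝ, x - r ≤ u → u + h/2 ≤ x + r → y - h ≤ u → u + h/2 ≤ y + h →
          ENNReal.ofReal ((30 * C_R ^ 2)⁻¹ * (2*r)^δ)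
            ≤ ENNReal.ofReal (h ^ (δ-1)) * volume (Set.Icc (x-r) (x+r) ∩ X) := by
        intro u h1 h2 h3 h4
        have hsub : Set.Icc u (u + h/2) ⊆ Set.Icc (x-r) (x+r) ∩ X := by
          intro w hw
          rw [Set.mem_Icc] at hw
          refine ⟨Set.mem_Icc.mpr ⟨by linarith [hw.1], by linarith [hw.2]⟩, ?_⟩
          exact hmemX y hy w (abs_le.mpr ⟨by linarith [hw.1], by linarith [hw.2]⟩)
        have hv : ENNReal.ofReal (h/2) ≤ volume (Set.Icc (x-r) (x+r) ∩ X) := by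
          have hm := measure_mono (μ := volume) hsub
          rwa [Real.volume_Icc, show u + h/2 - u = h/2 from by ring] at hm
        calc ENNReal.ofReal ((30 * C_R ^ 2)⁻¹ * (2*r)^δ)
            ≤ ENNReal.ofReal (h^(δ-1) * (h/2)) := by
              apply ENNReal.ofReal_le_ofReal
              have e0 : h^(δ-1) * (h/2) = h^δ / 2 := by
                rw [Real.rpow_sub hh0, Real.rpow_one]
                field_simp
              rw [e0]
              have h8 : (2*r)^δ ≤ 8 * h^δ := by
                calc (2*r)^δ ≤ (8*h)^δ :=
                      Real.rpow_le_rpow (by linarith) (by linarith) hδ0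
                  _ = 8^δ * h^δ := Real.mul_rpow (by norm_num) hh0.le
                  _ ≤ 8 * h^δ := by
                      have h85 : (8:ℝ)^δ ≤ 8 := by
                        calc (8:ℝ)^δ ≤ 8^(1:ℝ) :=
                              Real.rpow_le_rpow_of_exponent_le (by norm_num) hδ1
                          _ = 8 := Real.rpow_one 8
                      nlinarith [Real.rpow_pos_of_pos hh0 δ]
              have hinv : (30 * C_R^2)⁻¹ ≤ (30:ℝ)⁻¹ := by
                apply inv_anti₀ (by norm_num)
                nlinarith
              have hA : (0:ℝ) ≤ (2*r)^δ := Real.rpow_nonneg (by linarith) δ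
              have hiv : (0:ℝ) ≤ (30 * C_R^2)⁻¹ := by positivity
              nlinarith [mul_le_mul_of_nonneg_right hinv hA,
                Real.rpow_pos_of_pos hh0 δ]
          _ = ENNReal.ofReal (h^(δ-1)) * ENNReal.ofReal (h/2) :=
              ENNReal.ofReal_mul (Real.rpow_nonneg hh0.le _)
          _ ≤ _ := mul_le_mul_right hv _
      rcases le_or_gt x y with hle | hlt
      · exact main x (by linarith) (by linarith) (by linarith [hxy.1]) (by linarith)
      · exact main (x - h/2) (by linarith) (by linarith) (by linarith [hxy.1])
          (by linarith [hxy.2])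
    · -- large r: Fubini argument
      push_neg at hcase
      set J := Set.Icc (y - r/2) (y + r/2) with hJdef
      set G := Λ ∩ J with hGdef
      have hGm : MeasurableSet G := (hΛ.isClosed.inter isClosed_Icc).measurableSet
      set E := G + Set.Icc (-h) h with hEdef
      have hEm : MeasurableSet E :=
        (((hΛ.inter_right isClosed_Icc).add isCompact_Icc).isClosed).measurableSet
      have hEsub : E ⊆ Set.Icc (x-r) (x+r) ∩ X := by
        rintro w ⟨z, hz, u, hu, rfl⟩
        obtain ⟨hzΛ, hzJ⟩ := hz
        rw [hJdef, Set.mem_Icc] at hzJ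
        rw [Set.mem_Icc] at hu
        have hzu1 : x - r ≤ z + u := by
          linarith [hxy.1, hxy.2, hzJ.1, hzJ.2, hu.1, hu.2, hcase]
        have hzu2 : z + u ≤ x + r := by
          linarith [hxy.1, hxy.2, hzJ.1, hzJ.2, hu.1, hu.2, hcase]
        exact ⟨Set.mem_Icc.mpr ⟨hzu1, hzu2⟩, ⟨z, hzΛ, u, Set.mem_Icc.mpr hu, rfl⟩⟩
      have hJμ : ENNReal.ofReal (C_R⁻¹ * r^δ) ≤ μΛ J := by
        have h2 := hreg.2 y (r/2) hy (by linarith) (by linarith)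
        rw [show (2:ℝ) * (r/2) = r from by ring] at h2
        rw [hJdef]
        exact h2
      have hJG : μΛ J = μΛ G := by
        refine le_antisymm ?_ (measure_mono Set.inter_subset_right)
        calc μΛ J ≤ μΛ (G ∪ Λᶜ) := by
              apply measure_mono
              intro w hw
              by_cases hwΛ : w ∈ Λ
              · exact Or.inl ⟨hwΛ, hw⟩
              · exact Or.inr hwΛ
          _ ≤ μΛ G + μΛ Λᶜ := measure_union_le _ _
          _ = μΛ G := by rw [hsupp, add_zero]
      set ν := μΛ.restrict G with hνdef
      have key : ENNReal.ofReal (2 * h) * μΛ G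
          ≤ ENNReal.ofReal (C_R * (2*h)^δ) * volume E := by
        have hswap := swap_lemma ν h
        rw [hνdef, Measure.restrict_apply_univ] at hswap
        rw [← hswap, ← lintegral_indicator_const hEm]
        apply lintegral_mono
        intro t
        by_cases ht : t ∈ E
        · rw [Set.indicator_of_mem ht]
          calc ν (Set.Icc (t - h) (t + h))
              = μΛ (Set.Icc (t - h) (t + h) ∩ G) := by
                rw [hνdef, Measure.restrict_apply measurableSet_Icc]
            _ ≤ μΛ (Set.Icc (t - h) (t + h)) := measure_mono Set.inter_subset_left
            _ ≤ ENNReal.ofReal (C_R * ((t + h) - (t - h))^δ) :=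
                hreg.1 _ _ (by linarith)
            _ = ENNReal.ofReal (C_R * (2*h)^δ) := by
                rw [show t + h - (t - h) = 2*h from by ring]
        · rw [Set.indicator_of_notMem ht]
          have hempty : Set.Icc (t - h) (t + h) ∩ G = ∅ := by
            rw [Set.eq_empty_iff_forall_notMem]
            rintro w ⟨hwI, hwG⟩
            rw [Set.mem_Icc] at hwI
            exact ht ⟨w, hwG, t - w, Set.mem_Icc.mpr ⟨by linarith [hwI.2], by linarith [hwI.1]⟩, by ring⟩
          show (μΛ.restrict G) (Set.Icc (t - h) (t + h)) ≤ 0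
          rw [Measure.restrict_apply measurableSet_Icc, hempty, measure_empty]
      have hB0 : ENNReal.ofReal (C_R * (2*h)^δ) ≠ 0 :=
        (ENNReal.ofReal_pos.mpr (mul_pos hC0 (Real.rpow_pos_of_pos (by linarith) δ))).ne'
      refine (ENNReal.mul_le_mul_iff_right hB0 ENNReal.ofReal_ne_top).mp ?_
      calc ENNReal.ofReal (C_R * (2*h)^δ) * ENNReal.ofReal ((30 * C_R ^ 2)⁻¹ * (2*r)^δ)
          = ENNReal.ofReal (C_R * (2*h)^δ * ((30 * C_R ^ 2)⁻¹ * (2*r)^δ)) :=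
            (ENNReal.ofReal_mul (by positivity)).symm
        _ ≤ ENNReal.ofReal (h^(δ-1) * (2 * h * (C_R⁻¹ * r^δ))) := by
            apply ENNReal.ofReal_le_ofReal
            have e2h : (2*h)^δ = 2^δ * h^δ := Real.mul_rpow (by norm_num) hh0.le
            have e2r : (2*r)^δ = 2^δ * r^δ := Real.mul_rpow (by norm_num) hr0.le
            have ehh : h^(δ-1) = h^δ / h := by
              rw [Real.rpow_sub hh0, Real.rpow_one]
            have h22 : (2:ℝ)^δ ≤ 2 := by
              calc (2:ℝ)^δ ≤ 2^(1:ℝ) :=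
                    Real.rpow_le_rpow_of_exponent_le (by norm_num) hδ1
                _ = 2 := Real.rpow_one 2
            have h2p : (0:ℝ) < 2^δ := Real.rpow_pos_of_pos (by norm_num) δ
            have hPp : (0:ℝ) < h^δ := Real.rpow_pos_of_pos hh0 δ
            have hQp : (0:ℝ) < r^δ := Real.rpow_pos_of_pos hr0 δ
            have hCne : C_R ≠ 0 := hC0.ne'
            rw [e2h, e2r, ehh]
            have ht4 : (2:ℝ)^δ * 2^δ ≤ 4 := by nlinarith
            have hCi : (0:ℝ) < C_R⁻¹ := inv_pos.mpr hC0
            have eL : C_R * (2^δ * h^δ) * ((30 * C_R^2)⁻¹ * (2^δ * r^δ))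
                = (2^δ * 2^δ) * (30:ℝ)⁻¹ * (C_R⁻¹ * (h^δ * r^δ)) := by
              field_simp
            have eR : h^δ / h * (2 * h * (C_R⁻¹ * r^δ))
                = 2 * (C_R⁻¹ * (h^δ * r^δ)) := by
              field_simp
            rw [eL, eR]
            nlinarith [ht4, mul_pos hCi (mul_pos hPp hQp)]
        _ = ENNReal.ofReal (h^(δ-1)) * ENNReal.ofReal (2 * h * (C_R⁻¹ * r^δ)) :=
            ENNReal.ofReal_mul (Real.rpow_nonneg hh0.le _)
        _ = ENNReal.ofReal (h^(δ-1)) * (ENNReal.ofReal (2 * h) * ENNReal.ofReal (C_R⁻¹ * r^δ)) := by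
            congr 1
            exact ENNReal.ofReal_mul (by linarith)
        _ ≤ ENNReal.ofReal (h^(δ-1)) * (ENNReal.ofReal (2 * h) * μΛ J) :=
            mul_le_mul_right (mul_le_mul_right hJμ _) _
        _ = ENNReal.ofReal (h^(δ-1)) * (ENNReal.ofReal (2 * h) * μΛ G) := by rw [hJG]
        _ ≤ ENNReal.ofReal (h^(δ-1)) * (ENNReal.ofReal (C_R * (2*h)^δ) * volume E) :=
            mul_le_mul_right key _
        _ ≤ ENNReal.ofReal (h^(δ-1)) * (ENNReal.ofReal (C_R * (2*h)^δ)
              * volume (Set.Icc (x-r) (x+r) ∩ X)) :=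
            mul_le_mul_right (mul_le_mul_right (measure_mono hEsub) _) _
        _ = ENNReal.ofReal (C_R * (2*h)^δ)
              * (ENNReal.ofReal (h^(δ-1)) * volume (Set.Icc (x-r) (x+r) ∩ X)) := by
            ring
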